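/- Let i ∈ [k+4], j ∈ I_i, t ∈ I_j^i. If σ ∈ F_{j,t}^i and {j,t} ∈ σ, then σ \ {{j,t}} ∈ F_{j,t}^i; and if σ ∈ F_{j,t}^i with {j,t} ∉ σ, then σ ∪ {{j,t}} ∈ F_{j,t}^i. Hence the map σ ↦ σ Δ {{j,t}} (symmetric difference) is an involution on F_{j,t}^i giving a perfect matching pairing σ \ {{j,t}} with σ ∪ {{j,t}}. -/
import Mathlib


open Finset

/-- Potential vertices of `KG_{2,k}`: finite subsets of `[k+4]` (modelled as `ZMod (k+4)`);
actual vertices are those of cardinality 2. -/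
abbrev Vtx (k : ℕ) := Finset (ZMod (k + 4))

/-- `S_σ`, the union of the pairs in `σ`. -/
def Sσ {k : ℕ} (σ : Finset (Vtx k)) : Finset (ZMod (k + 4)) := σ.sup id

/-- `C_σ = [k+4] \ S_σ`. -/
def Cσ {k : ℕ} (σ : Finset (Vtx k)) : Finset (ZMod (k + 4)) := Finset.univ \ σ.sup id

/-- Adjacency in the Kneser graph `KG_{2,k}`: two 2-subsets that are disjoint. -/
def kgAdj {k : ℕ} (u v : Vtx k) : Prop := u.card = 2 ∧ v.card = 2 ∧ Disjoint u v

/-- A stable vertex: a 2-subset containing no two cyclically consecutive elements. -/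
def IsStable {k : ℕ} (u : Vtx k) : Prop := u.card = 2 ∧ ∀ a ∈ u, a + 1 ∉ u

/-- Adjacency in `S_{2,k}`: a Kneser edge at least one of whose endpoints is stable. -/
def sAdj {k : ℕ} (u v : Vtx k) : Prop := kgAdj u v ∧ (IsStable u ∨ IsStable v)

/-- `σ` is a face of the neighborhood complex `N(KG_{2,k})`: the members of `σ`
have a common neighbor in `KG_{2,k}`. -/
def kgFace {k : ℕ} (σ : Finset (Vtx k)) : Prop :=
  ∃ v : Vtx k, v.card = 2 ∧ ∀ u ∈ σ, kgAdj v u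

/-- `σ` is a face of the neighborhood complex `N(S_{2,k})`. -/
def sFace {k : ℕ} (σ : Finset (Vtx k)) : Prop :=
  ∃ v : Vtx k, v.card = 2 ∧ ∀ u ∈ σ, sAdj v u

/-- `X_{i,i+1}` (explicit description): sets `σ` of vertices each disjoint from
`{i,i+1}`, with `C_σ = {i,i+1}`, containing `{j,j+1}` for some `j ≠ i`. -/
def XsetC {k : ℕ} (i : ZMod (k + 4)) (σ : Finset (Vtx k)) : Prop :=
  (∀ u ∈ σ, u.card = 2 ∧ Disjoint u ({i, i + 1} : Vtx k)) ∧
  Cσ σ = {i, i + 1} ∧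
  ∃ j : ZMod (k + 4), j ≠ i ∧ ({j, j + 1} : Vtx k) ∈ σ

/-- `I_i = [k+4] \ {i-1, i, i+1}`. -/
def Ii {k : ℕ} (i : ZMod (k + 4)) : Finset (ZMod (k + 4)) :=
  Finset.univ \ {i - 1, i, i + 1}

/-- `E_j^i ⊆ X_{i,i+1}`: those `σ` for which `j` is the least index in `I_i`
(with respect to the order of `[k+4]`, via `ZMod.val`) with `{j,j+1} ∈ σ`. -/
def Eji {k : ℕ} (i j : ZMod (k + 4)) (σ : Finset (Vtx k)) : Prop :=
  XsetC i σ ∧ ({j, j + 1} : Vtx k) ∈ σ ∧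
    ∀ s ∈ Ii i, s.val < j.val → ({s, s + 1} : Vtx k) ∉ σ

/-- `I_j^i = [k+4] \ {i, i+1, j-1, j, j+1}`. -/
def Iji {k : ℕ} (i j : ZMod (k + 4)) : Finset (ZMod (k + 4)) :=
  Finset.univ \ {i, i + 1, j - 1, j, j + 1}

/-- `𝓘_t = {r ∈ I_j^i : r < t}` (order of `[k+4]`, via `ZMod.val`). -/
def It {k : ℕ} (i j t : ZMod (k + 4)) : Finset (ZMod (k + 4)) :=
  (Iji i j).filter fun r => r.val < t.val

/-- `F_{j,t}^i`: those `σ ∈ E_j^i` such that for all `r ∈ 𝓘_t`, `{j,r} ∈ σ` and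
`r ∈ C_{σ \ {j,r}}`, and either `{j,t} ∉ σ` or `C_{σ \ {j,t}} = {i,i+1}`. -/
def Fjt {k : ℕ} (i j t : ZMod (k + 4)) (σ : Finset (Vtx k)) : Prop :=
  Eji i j σ ∧
  (∀ r ∈ It i j t, ({j, r} : Vtx k) ∈ σ ∧ r ∈ Cσ (σ.erase {j, r})) ∧
  (({j, t} : Vtx k) ∉ σ ∨ Cσ (σ.erase {j, t}) = {i, i + 1})

/-- `F_j^i`: those `σ ∈ E_j^i` with `{j,s} ∈ σ` and `C_{σ \ {j,s}} = {i,i+1,s}`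
for every `s ∈ I_j^i`. -/
def Fj {k : ℕ} (i j : ZMod (k + 4)) (σ : Finset (Vtx k)) : Prop :=
  Eji i j σ ∧
  ∀ s ∈ Iji i j, ({j, s} : Vtx k) ∈ σ ∧ Cσ (σ.erase {j, s}) = {i, i + 1, s}

/-- `F_{j,t}^i` is closed under removing/adding the pair `{j,t}`;
hence `σ ↦ σ Δ {{j,t}}` is an involution on `F_{j,t}^i` giving a perfect
matching pairing `σ \ {{j,t}}` with `σ ∪ {{j,t}}`. -/
theorem Fjt_toggle {k : ℕ} (i j t : ZMod (k + 4))
    (hj : j ∈ Ii i) (ht : t ∈ Iji i j) (σ : Finset (Vtx k)) (hσ : Fjt i j t σ) :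
    (({j, t} : Vtx k) ∈ σ → Fjt i j t (σ.erase {j, t})) ∧
    (({j, t} : Vtx k) ∉ σ → Fjt i j t (insert ({j, t} : Vtx k) σ)) ∧
    (∀ toggle : Finset (Vtx k) → Finset (Vtx k),
      (toggle = fun ρ => if ({j, t} : Vtx k) ∈ ρ then ρ.erase {j, t}
                         else insert ({j, t} : Vtx k) ρ) →
      Fjt i j t (toggle σ) ∧ toggle (toggle σ) = σ) := by
  haveI : Fact (1 < k + 4) := ⟨by omega⟩
  obtain ⟨⟨⟨hcard, hC, j', hj'i, hj'mem⟩, hjj1, hmin⟩, hIt, hlast⟩ := hσ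
  -- basic inequality facts
  simp only [Ii, Finset.mem_sdiff, Finset.mem_univ, true_and, Finset.mem_insert,
    Finset.mem_singleton, not_or] at hj
  obtain ⟨hji1, hji, hji2⟩ := hj
  simp only [Iji, Finset.mem_sdiff, Finset.mem_univ, true_and, Finset.mem_insert,
    Finset.mem_singleton, not_or] at ht
  obtain ⟨hti, hti1, htj1, htj, htj2⟩ := ht
  have hone : (1 : ZMod (k + 4)) ≠ 0 := one_ne_zero
  have hjt : j ≠ t := fun h => htj h.symm
  have hmemC : ∀ x : ZMod (k+4), ∀ ρ : Finset (Vtx k), x ∈ Cσ ρ ↔ x ∉ ρ.sup id := by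
    intro x ρ; simp [Cσ]
  -- {j,j+1} ≠ {j,t}
  have hne1 : ({j, j+1} : Vtx k) ≠ {j, t} := by
    intro h
    have : t ∈ ({j, j+1} : Vtx k) := h ▸ (by simp)
    simp only [Finset.mem_insert, Finset.mem_singleton] at this
    rcases this with h1 | h1
    · exact htj h1
    · exact htj2 h1
  -- facts about r ∈ It
  have hrfacts : ∀ r ∈ It i j t, r ≠ t ∧ r ≠ j ∧ ({j, r} : Vtx k) ≠ {j, t} := by
    intro r hr
    simp only [It, Iji, Finset.mem_filter, Finset.mem_sdiff, Finset.mem_univ, true_and,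
      Finset.mem_insert, Finset.mem_singleton, not_or] at hr
    obtain ⟨⟨_, _, _, hrj, _⟩, hrv⟩ := hr
    have hrt : r ≠ t := fun h => by simp [h] at hrv
    refine ⟨hrt, hrj, fun h => ?_⟩
    have : t ∈ ({j, r} : Vtx k) := h ▸ (by simp)
    simp only [Finset.mem_insert, Finset.mem_singleton] at this
    rcases this with h1 | h1
    · exact htj h1
    · exact hrt h1.symm
  -- Part 1: erase
  have part1 : ({j, t} : Vtx k) ∈ σ → Fjt i j t (σ.erase {j, t}) := by
    intro hmem
    have hCer : Cσ (σ.erase {j, t}) = {i, i+1} := by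
      rcases hlast with h | h
      · exact absurd hmem h
      · exact h
    refine ⟨⟨⟨fun u hu => hcard u (Finset.mem_of_mem_erase hu), hCer,
      j, hji, Finset.mem_erase.mpr ⟨hne1, hjj1⟩⟩,
      Finset.mem_erase.mpr ⟨hne1, hjj1⟩,
      fun s hs hv h => hmin s hs hv (Finset.mem_of_mem_erase h)⟩, ?_, ?_⟩
    · intro r hr
      obtain ⟨hrt, hrj, hne⟩ := hrfacts r hr
      obtain ⟨hm, hc⟩ := hIt r hr
      refine ⟨Finset.mem_erase.mpr ⟨hne, hm⟩, ?_⟩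
      rw [hmemC] at hc ⊢
      intro hx
      exact hc (Finset.le_iff_subset.mp (Finset.sup_mono (Finset.erase_subset_erase _ (Finset.erase_subset _ _))) hx)
    · exact Or.inl (Finset.notMem_erase _ _)
  -- Part 2: insert
  have part2 : ({j, t} : Vtx k) ∉ σ → Fjt i j t (insert ({j, t} : Vtx k) σ) := by
    intro hmem
    have hjtcard : ({j, t} : Vtx k).card = 2 := Finset.card_pair hjt
    have hjtdisj : Disjoint ({j, t} : Vtx k) ({i, i+1} : Vtx k) := by
      simp only [Finset.disjoint_left, Finset.mem_insert, Finset.mem_singleton]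
      rintro a (rfl | rfl) <;> push_neg <;>
        exact ⟨by assumption, by assumption⟩
    have hsupσ : σ.sup id = Finset.univ \ {i, i+1} := by
      have := hC
      simp only [Cσ] at this
      have h2 : (σ.sup id)ᶜ = ({i, i+1} : Finset (ZMod (k+4))) := by
        rwa [Finset.compl_eq_univ_sdiff]
      rw [← Finset.compl_eq_univ_sdiff, ← h2, compl_compl]
    have hjin : j ∈ σ.sup id := by
      rw [hsupσ]; simp [hji, hji2]
    have htin : t ∈ σ.sup id := by
      rw [hsupσ]; simp [hti, hti1]
    have hsupins : (insert ({j, t} : Vtx k) σ).sup id = σ.sup id := by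
      rw [Finset.sup_insert]
      simp only [id]
      rw [sup_eq_right]
      intro x hx
      simp only [Finset.mem_insert, Finset.mem_singleton] at hx
      rcases hx with rfl | rfl
      · exact hjin
      · exact htin
    have hCins : Cσ (insert ({j, t} : Vtx k) σ) = {i, i+1} := by
      simp only [Cσ, hsupins]
      exact hC
    refine ⟨⟨⟨?_, hCins, j, hji, Finset.mem_insert_of_mem hjj1⟩,
      Finset.mem_insert_of_mem hjj1, ?_⟩, ?_, ?_⟩
    · intro u hu
      rcases Finset.mem_insert.mp hu with rfl | hu
      · exact ⟨hjtcard, hjtdisj⟩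
      · exact hcard u hu
    · intro s hs hv h
      simp only [Ii, Finset.mem_sdiff, Finset.mem_univ, true_and, Finset.mem_insert,
        Finset.mem_singleton, not_or] at hs
      rcases Finset.mem_insert.mp h with heq | h
      · -- {s, s+1} = {j, t}
        have hjmem : j ∈ ({s, s+1} : Vtx k) := heq ▸ (by simp)
        simp only [Finset.mem_insert, Finset.mem_singleton] at hjmem
        have htmem : t ∈ ({s, s+1} : Vtx k) := heq ▸ (by simp)
        simp only [Finset.mem_insert, Finset.mem_singleton] at htmem
        rcases hjmem with rfl | rfl
        · rcases htmem with h1 | h1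
          · exact htj h1
          · exact htj2 h1
        · rcases htmem with h1 | h1
          · exact htj1 (by rw [h1]; ring)
          · exact htj h1
      · exact hmin s (by simp [Ii, hs.1, hs.2.1, hs.2.2]) hv h
    · intro r hr
      obtain ⟨hrt, hrj, hne⟩ := hrfacts r hr
      obtain ⟨hm, hc⟩ := hIt r hr
      refine ⟨Finset.mem_insert_of_mem hm, ?_⟩
      rw [Finset.erase_insert_of_ne hne.symm]
      rw [hmemC] at hc ⊢
      rw [Finset.sup_insert]
      simp only [id, Finset.mem_union, Finset.sup_eq_union, not_or]
      refine ⟨?_, hc⟩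
      simp [hrj, hrt]
    · right
      rw [Finset.erase_insert hmem]
      exact hC
  refine ⟨part1, part2, ?_⟩
  intro toggle htog
  subst htog
  by_cases hm : ({j, t} : Vtx k) ∈ σ
  · simp only [hm, if_true]
    refine ⟨part1 hm, ?_⟩
    simp only [Finset.notMem_erase, if_false]
    exact Finset.insert_erase hm
  · simp only [hm, if_false]
    refine ⟨part2 hm, ?_⟩
    simp only [Finset.mem_insert_self, if_true]
    exact Finset.erase_insert hm
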